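/- Let R be a G-graded commutative ring such that the only homogeneous zero divisor is 0 (h(R) ∩ Z(R) = {0}). Then H = R[X]/(X^2), with the induced G-grading H_σ = (R_σ[X] + (X^2))/(X^2), is an EM-G-graded ring. -/

import Mathlib

open Polynomial

section Aux

variable {R : Type*} [CommRing R]

/-- The polynomial of second components. -/
noncomputable def sndP (p : Polynomial (DualNumber R)) : Polynomial R :=
  ⟨AddMonoidAlgebra.ofCoeff (p.toFinsupp.coeff.mapRange TrivSqZeroExt.snd TrivSqZeroExt.snd_zero)⟩

@[simp] lemma coeff_sndP (p : Polynomial (DualNumber R)) (n : ℕ) :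
    (sndP p).coeff n = (p.coeff n).snd := by
  rcases p with ⟨q⟩
  simp [sndP, coeff_ofFinsupp, Finsupp.mapRange_apply, Polynomial.coeff]

noncomputable abbrev φR : DualNumber R →+* R := (TrivSqZeroExt.fstHom R R R).toRingHom

@[simp] lemma φR_apply (x : DualNumber R) : (φR : DualNumber R →+* R) x = x.fst := rfl

lemma eps_mul_eq_zero_iff (x : DualNumber R) : DualNumber.eps * x = 0 ↔ x.fst = 0 := by
  constructor
  · intro h
    have h2 := congrArg TrivSqZeroExt.snd h
    simpa [TrivSqZeroExt.snd_mul, MulOpposite.smul_eq_mul_unop] using h2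
  · intro h
    apply TrivSqZeroExt.ext
    · simp [TrivSqZeroExt.fst_mul]
    · simp [TrivSqZeroExt.snd_mul, MulOpposite.smul_eq_mul_unop, h]

lemma eq_eps_mul_inl (x : DualNumber R) (h : x.fst = 0) :
    x = DualNumber.eps * TrivSqZeroExt.inl x.snd := by
  apply TrivSqZeroExt.ext
  · simp [TrivSqZeroExt.fst_mul, h]
  · simp [TrivSqZeroExt.snd_mul, MulOpposite.smul_eq_mul_unop]

lemma inl_mem_nonZeroDivisors {b : R} (hb : b ∈ nonZeroDivisors R) :
    (TrivSqZeroExt.inl b : DualNumber R) ∈ nonZeroDivisors (DualNumber R) := by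
  rw [mem_nonZeroDivisors_iff_right]
  intro z hz
  have h1 : z.fst * b = 0 := by
    have := congrArg TrivSqZeroExt.fst hz
    simpa [TrivSqZeroExt.fst_mul] using this
  have h2 : z.snd * b = 0 := by
    have := congrArg TrivSqZeroExt.snd hz
    simpa [TrivSqZeroExt.snd_mul, MulOpposite.smul_eq_mul_unop] using this
  exact TrivSqZeroExt.ext (mem_nonZeroDivisors_iff_right.1 hb _ h1) (mem_nonZeroDivisors_iff_right.1 hb _ h2)

end Aux

/-- If the only homogeneous zero divisor of the `G`-graded ring `R` is `0`,
then `H = R[X]/(X²)` (realized as the dual numbers `R[ε]`, `ε² = 0`), with the induced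
grading in which `a + bX` is homogeneous iff `a, b ∈ R_σ` for some `σ`, is an
EM-`G`-graded ring. -/
theorem stmt_17 {G R : Type*} [AddGroup G] [DecidableEq G] [CommRing R]
    (𝒜 : G → AddSubgroup R) [GradedRing 𝒜]
    (hz : ∀ r : R, (∃ σ : G, r ∈ 𝒜 σ) → r ∉ nonZeroDivisors R → r = 0) :
    ∀ f : Polynomial (DualNumber R), f ≠ 0 →
      (∃ σ : G, ∀ i, (f.coeff i).fst ∈ 𝒜 σ ∧ (f.coeff i).snd ∈ 𝒜 σ) →
      f ∉ nonZeroDivisors (Polynomial (DualNumber R)) →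
      ∃ (c : DualNumber R) (g : Polynomial (DualNumber R)),
        c ∉ nonZeroDivisors (DualNumber R) ∧
        g ∈ nonZeroDivisors (Polynomial (DualNumber R)) ∧
        f = C c * g := by
  intro f hf hhom hzd
  obtain ⟨σ, hσ⟩ := hhom
  haveI : Nontrivial R := by
    by_contra hs
    rw [not_nontrivial_iff_subsingleton] at hs
    haveI : Subsingleton (DualNumber R) :=
      ⟨fun a b => TrivSqZeroExt.ext (Subsingleton.elim _ _) (Subsingleton.elim _ _)⟩
    exact hf (Polynomial.ext fun n => Subsingleton.elim _ _)
  -- the zero divisor witness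
  replace hzd : ¬ ∀ x : Polynomial (DualNumber R), x * f = 0 → x = 0 :=
    fun H => hzd ((mem_nonZeroDivisors_iff_right (M₀ := Polynomial (DualNumber R))).2 H)
  push_neg at hzd
  obtain ⟨h, hhf, hne⟩ := hzd
  -- regularity of homogeneous nonzero elements of R
  have hreg : ∀ r : R, r ∈ 𝒜 σ → r ≠ 0 → r ∈ nonZeroDivisors R := by
    intro r hr hr0
    by_contra hnr
    exact hr0 (hz r ⟨σ, hr⟩ hnr)
  -- key: the first-component polynomial of f is zero
  have key : f.map (φR : DualNumber R →+* R) = 0 := by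
    by_contra hf0
    have hregf : f.map (φR : DualNumber R →+* R) ∈ nonZeroDivisors (Polynomial R) := by
      apply Polynomial.mem_nonZeroDivisors_of_leadingCoeff
      have hlc : (f.map (φR : DualNumber R →+* R)).leadingCoeff ≠ 0 :=
        leadingCoeff_ne_zero.2 hf0
      have hmem : (f.map (φR : DualNumber R →+* R)).leadingCoeff ∈ 𝒜 σ := by
        rw [leadingCoeff, coeff_map, φR_apply]
        exact (hσ _).1
      exact hreg _ hmem hlc
    -- first components of h vanish
    have h0 : h.map (φR : DualNumber R →+* R) = 0 := by
      have : h.map (φR : DualNumber R →+* R) * f.map (φR : DualNumber R →+* R) = 0 := by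
        rw [← Polynomial.map_mul, hhf, Polynomial.map_zero]
      exact mem_nonZeroDivisors_iff_right.1 hregf _ this
    have hfst : ∀ n, (h.coeff n).fst = 0 := by
      intro n
      have := congrArg (fun p => Polynomial.coeff p n) h0
      simpa [coeff_map] using this
    -- write h = ε • h'
    set h' : Polynomial (DualNumber R) := (sndP h).map (TrivSqZeroExt.inlHom R R) with hh'
    have hh : h = C DualNumber.eps * h' := by
      refine Polynomial.ext fun n => ?_
      rw [coeff_C_mul, hh', coeff_map, coeff_sndP]
      exact eq_eps_mul_inl _ (hfst n)
    -- then ε * (h' * f) = 0, so fst of h' * f vanishes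
    have hz2 : (h' * f).map (φR : DualNumber R →+* R) = 0 := by
      refine Polynomial.ext fun n => ?_
      rw [coeff_map, coeff_zero, φR_apply]
      refine (eps_mul_eq_zero_iff _).1 ?_
      have hC : C DualNumber.eps * (h' * f) = 0 := by
        rw [← mul_assoc, ← hh, hhf]
      have := congrArg (fun p => Polynomial.coeff p n) hC
      simpa [coeff_C_mul] using this
    -- so sndP h * (f.map φR) = 0, hence sndP h = 0
    have hsnd : sndP h = 0 := by
      apply mem_nonZeroDivisors_iff_right.1 hregf
      have hm : (h'.map (φR : DualNumber R →+* R)) * (f.map (φR : DualNumber R →+* R)) = 0 := by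
        rw [← Polynomial.map_mul, hz2]
      have hh'map : h'.map (φR : DualNumber R →+* R) = sndP h := by
        refine Polynomial.ext fun n => ?_
        rw [hh', coeff_map, coeff_map, φR_apply, coeff_sndP]
        simp [TrivSqZeroExt.fst_inl]
      rwa [hh'map] at hm
    apply hne
    refine Polynomial.ext fun n => ?_
    rw [coeff_zero]
    have h2 : (h.coeff n).snd = 0 := by
      have := congrArg (fun p => Polynomial.coeff p n) hsnd
      simpa using this
    exact TrivSqZeroExt.ext (hfst n) h2
  -- now build g
  set g : Polynomial (DualNumber R) := (sndP f).map (TrivSqZeroExt.inlHom R R) with hg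
  have hfcoeff_fst : ∀ n, (f.coeff n).fst = 0 := by
    intro n
    have := congrArg (fun p => Polynomial.coeff p n) key
    simpa [coeff_map] using this
  have hfg : f = C DualNumber.eps * g := by
    refine Polynomial.ext fun n => ?_
    rw [coeff_C_mul, hg, coeff_map, coeff_sndP]
    exact eq_eps_mul_inl _ (hfcoeff_fst n)
  have hg0 : g ≠ 0 := by
    intro hg0
    apply hf
    rw [hfg, hg0, mul_zero]
  refine ⟨DualNumber.eps, g, ?_, ?_, hfg⟩
  · intro hmem
    have he : (DualNumber.eps : DualNumber R) = 0 := mem_nonZeroDivisors_iff_right.1 hmem _ DualNumber.eps_mul_eps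
    have := congrArg TrivSqZeroExt.snd he
    simp at this
  · apply Polynomial.mem_nonZeroDivisors_of_leadingCoeff
    have hlc : g.leadingCoeff ≠ 0 := leadingCoeff_ne_zero.2 hg0
    have hlceq : g.leadingCoeff = TrivSqZeroExt.inl ((f.coeff g.natDegree).snd) := by
      rw [leadingCoeff, hg, coeff_map, coeff_sndP]
      rfl
    have hb0 : (f.coeff g.natDegree).snd ≠ 0 := by
      intro hb
      apply hlc
      rw [hlceq, hb, TrivSqZeroExt.inl_zero]
    have hbreg : (f.coeff g.natDegree).snd ∈ nonZeroDivisors R :=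
      hreg _ (hσ _).2 hb0
    rw [hlceq]
    exact inl_mem_nonZeroDivisors hbreg
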